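/- Let f : [−c, c] → {1,0,−1} satisfy: for all x,y,z ∈ [−c,c] with x+y+z = 0 the multiset {f(x),f(y),f(z)} is consistent. Then for all x, y ∈ [−c, c] with x, y > 0 and x/y ∈ ℚ, we have f(x) = f(y). -/

import Mathlib

def Consistent (x y z : ℤ) : Prop :=
  ({x, y, z} : Multiset ℤ) = {1, 1, -1} ∨
  ({x, y, z} : Multiset ℤ) = {1, 0, -1} ∨
  ({x, y, z} : Multiset ℤ) = {1, -1, -1} ∨
  ({x, y, z} : Multiset ℤ) = {0, 0, 0}

lemma cons_zero_of (a : ℤ) (ha : a = 1 ∨ a = 0 ∨ a = -1)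
    (h : Consistent a a a) : a = 0 := by
  rcases ha with h1 | h1 | h1 <;> subst h1 <;> revert h <;> unfold Consistent <;> decide

lemma cons_neg_of (a b : ℤ) (ha : a = 1 ∨ a = 0 ∨ a = -1) (hb : b = 1 ∨ b = 0 ∨ b = -1)
    (h : Consistent a b 0) : b = -a := by
  rcases ha with h1 | h1 | h1 <;> rcases hb with h2 | h2 | h2 <;>
    subst h1 <;> subst h2 <;> revert h <;> unfold Consistent <;> decide

lemma cons_eq_of (a b : ℤ) (ha : a = 1 ∨ a = 0 ∨ a = -1) (hb : b = 1 ∨ b = 0 ∨ b = -1)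
    (h : Consistent a a (-b)) : b = a := by
  rcases ha with h1 | h1 | h1 <;> rcases hb with h2 | h2 | h2 <;>
    subst h1 <;> subst h2 <;> revert h <;> unfold Consistent <;> decide

theorem stmt18 (c : ℝ) (f : ℝ → ℤ)
    (hrange : ∀ x ∈ Set.Icc (-c) c, f x = 1 ∨ f x = 0 ∨ f x = -1)
    (hcons : ∀ x ∈ Set.Icc (-c) c, ∀ y ∈ Set.Icc (-c) c, ∀ z ∈ Set.Icc (-c) c,
      x + y + z = 0 → Consistent (f x) (f y) (f z)) :
    ∀ x ∈ Set.Icc (-c) c, ∀ y ∈ Set.Icc (-c) c,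
      0 < x → 0 < y → (∃ q : ℚ, (q : ℝ) = x / y) → f x = f y := by
  intro x hx y hy hxpos hypos hq
  obtain ⟨q, hq⟩ := hq
  have hc : 0 < c := lt_of_lt_of_le hxpos hx.2
  have h0m : (0:ℝ) ∈ Set.Icc (-c) c := ⟨by linarith, le_of_lt hc⟩
  have hf0 : f 0 = 0 :=
    cons_zero_of _ (hrange 0 h0m) (hcons 0 h0m 0 h0m 0 h0m (by ring))
  have hneg : ∀ u ∈ Set.Icc (-c) c, f (-u) = - f u := by
    intro u hu
    have hu' : -u ∈ Set.Icc (-c) c := ⟨by linarith [hu.2], by linarith [hu.1]⟩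
    have h := hcons u hu (-u) hu' 0 h0m (by ring)
    rw [hf0] at h
    exact cons_neg_of _ _ (hrange u hu) (hrange _ hu') h
  have hstep : ∀ (δ : ℝ), 0 < δ → ∀ n : ℕ, 0 < n → (n:ℝ)*δ ≤ c →
      f ((n:ℝ)*δ) = f δ := by
    intro δ hδ n
    induction n with
    | zero => intro h; exact absurd h (lt_irrefl 0)
    | succ n ih =>
      intro _ hle
      rcases Nat.eq_zero_or_pos n with h0 | hn
      · subst h0; norm_num
      · have hn1 : (1:ℝ) ≤ (n:ℝ) := by exact_mod_cast hn
        have hcast : ((n+1:ℕ):ℝ) = (n:ℝ) + 1 := by push_cast; ring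
        rw [hcast] at hle ⊢
        have hnle : (n:ℝ)*δ ≤ c := by nlinarith
        have ihh := ih hn hnle
        have m1 : (n:ℝ)*δ ∈ Set.Icc (-c) c := ⟨by nlinarith, hnle⟩
        have m2 : δ ∈ Set.Icc (-c) c := ⟨by nlinarith, by nlinarith⟩
        have m3 : ((n:ℝ)+1)*δ ∈ Set.Icc (-c) c := ⟨by nlinarith, hle⟩
        have m3' : -(((n:ℝ)+1)*δ) ∈ Set.Icc (-c) c :=
          ⟨by linarith [m3.2], by linarith [m3.1]⟩
        have h := hcons _ m1 _ m2 _ m3' (by ring)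
        rw [hneg _ m3, ihh] at h
        exact cons_eq_of _ _ (hrange _ m2) (hrange _ m3) h
  -- arithmetic setup
  have hden : (0:ℝ) < (q.den : ℝ) := by exact_mod_cast q.pos
  set δ : ℝ := y / q.den with hδdef
  have hδpos : 0 < δ := div_pos hypos hden
  have hy' : y = ((q.den:ℕ):ℝ) * δ := by
    rw [hδdef, mul_div_assoc', eq_div_iff hden.ne']; ring
  have hqpos : 0 < q := by
    have : (0:ℝ) < (q:ℝ) := by rw [hq]; positivity
    exact_mod_cast this
  have hnum : 0 < q.num := Rat.num_pos.mpr hqpos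
  have hx' : x = ((q.num.toNat:ℕ):ℝ) * δ := by
    have hcst : (q:ℝ) = (q.num : ℝ) / (q.den : ℝ) := by
      rw [Rat.cast_def]
    have hxy : x = (q.num : ℝ) / (q.den : ℝ) * y := by
      rw [← hcst, hq]; field_simp
    have : ((q.num.toNat:ℕ):ℝ) = (q.num : ℝ) := by
      exact_mod_cast Int.toNat_of_nonneg hnum.le
    rw [this, hxy, hδdef]; ring
  have hfx : f x = f δ := by
    rw [hx']
    exact hstep δ hδpos _ (by omega) (by rw [← hx']; exact hx.2)
  have hfy : f y = f δ := by
    rw [hy']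
    exact hstep δ hδpos _ q.pos (by rw [← hy']; exact hy.2)
  rw [hfx, hfy]
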